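/- Let A ⊆ [1,N] be a Sidon set satisfying |A_p| ≤ p/2 + ε(p) for all primes p, where ε(p) ≥ 0 is uniformly bounded. Then |A| ≪ √N / log N. -/

import Mathlib

/-- r_{A-A}(n): number of pairs (a,b) ∈ A×A with a-b = n. -/
def rMinus (A : Finset ℤ) (n : ℤ) : ℕ :=
  ((A ×ˢ A).filter (fun p => p.1 - p.2 = n)).card

/-- A_p: residue classes covered by A modulo p. -/
def resSet (A : Finset ℤ) (p : ℕ) : Finset ℤ :=
  A.image (fun a => a % (p : ℤ))

set_option maxHeartbeats 1000000

/-- the set of pairs congruent mod m -/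
def pairsMod (A : Finset ℤ) (m : ℕ) : Finset (ℤ × ℤ) :=
  (A ×ˢ A).filter (fun p => p.1 % (m : ℤ) = p.2 % (m : ℤ))

lemma card_sq_le_pairs (A : Finset ℤ) (m : ℕ) :
    (A.card : ℝ) ^ 2 ≤ (resSet A m).card * (pairsMod A m).card := by
  classical
  set f : ℤ → ℤ := fun a => a % (m : ℤ) with hf
  have h1 : A.card = ∑ r ∈ resSet A m, (A.filter fun a => f a = r).card :=
    Finset.card_eq_sum_card_fiberwise (fun a ha => Finset.mem_image_of_mem f ha)
  have h2 : (pairsMod A m).card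
      = ∑ r ∈ resSet A m, ((pairsMod A m).filter fun p => f p.1 = r).card :=
    Finset.card_eq_sum_card_fiberwise (fun p hp => by
      simp only [pairsMod, Finset.mem_coe, Finset.mem_filter, Finset.mem_product] at hp
      exact Finset.mem_image_of_mem f hp.1.1)
  have h3 : ∀ r, ((pairsMod A m).filter fun p => f p.1 = r)
      = (A.filter fun a => f a = r) ×ˢ (A.filter fun a => f a = r) := by
    intro r
    ext ⟨a, b⟩
    simp only [pairsMod, Finset.mem_filter, Finset.mem_product]
    constructor
    · rintro ⟨⟨⟨ha, hb⟩, hab⟩, har⟩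
      exact ⟨⟨ha, har⟩, hb, by simp only [hf] at *; rw [← hab]; exact har⟩
    · rintro ⟨⟨ha, har⟩, hb, hbr⟩
      exact ⟨⟨⟨ha, hb⟩, by simp only [hf] at *; rw [har, hbr]⟩, har⟩
  have h2' : (pairsMod A m).card
      = ∑ r ∈ resSet A m, ((A.filter fun a => f a = r).card) ^ 2 := by
    rw [h2]; refine Finset.sum_congr rfl fun r _ => ?_
    rw [h3 r, Finset.card_product, sq]
  have hcs : ((∑ r ∈ resSet A m, ((A.filter fun a => f a = r).card : ℝ)) ^ 2)
      ≤ (resSet A m).card * ∑ r ∈ resSet A m, ((A.filter fun a => f a = r).card : ℝ) ^ 2 :=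
    sq_sum_le_card_mul_sum_sq
  calc (A.card : ℝ) ^ 2
      = (∑ r ∈ resSet A m, ((A.filter fun a => f a = r).card : ℝ)) ^ 2 := by
        rw [h1]; push_cast; ring
    _ ≤ (resSet A m).card * ∑ r ∈ resSet A m, ((A.filter fun a => f a = r).card : ℝ) ^ 2 := hcs
    _ = (resSet A m).card * (pairsMod A m).card := by rw [h2']; push_cast; ring

lemma pairs_le {A : Finset ℤ} {N m : ℕ} (hm : 1 ≤ m)
    (hA : A ⊆ Finset.Icc 1 (N : ℤ))
    (hS : ∀ n : ℤ, n ≠ 0 → rMinus A n ≤ 1) :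
    (pairsMod A m).card ≤ A.card + 2 * (N / m) := by
  classical
  set D := (pairsMod A m).filter (fun p => p.1 = p.2) with hD
  set O := (pairsMod A m).filter (fun p => ¬ p.1 = p.2) with hO
  have hsplit : (pairsMod A m).card = D.card + O.card := by
    rw [hD, hO, Finset.card_filter_add_card_filter_not]
  have hDle : D.card ≤ A.card := by
    apply Finset.card_le_card_of_injOn (fun p => p.1)
    · intro p hp
      simp only [hD, pairsMod, Finset.mem_coe, Finset.mem_filter, Finset.mem_product] at hp
      exact hp.1.1.1
    · intro p hp q hq h
      simp only [Finset.mem_coe, hD, Finset.mem_filter] at hp hq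
      exact Prod.ext h (by rw [← hp.2, ← hq.2]; exact h)
  have hOle : O.card ≤ 2 * (N / m) := by
    set b : ℕ := N / m with hb
    have hinj : Set.InjOn (fun p : ℤ × ℤ => p.1 - p.2) O := by
      intro p hp q hq h
      simp only [Finset.mem_coe, hO, pairsMod, Finset.mem_filter, Finset.mem_product] at hp hq
      have hn : p.1 - p.2 ≠ 0 := sub_ne_zero.mpr hp.2
      have h1 := hS (p.1 - p.2) hn
      rw [rMinus] at h1
      have hpmem : p ∈ (A ×ˢ A).filter (fun q => q.1 - q.2 = p.1 - p.2) :=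
        Finset.mem_filter.mpr ⟨Finset.mem_product.mpr hp.1.1, rfl⟩
      have hqmem : q ∈ (A ×ˢ A).filter (fun q' => q'.1 - q'.2 = p.1 - p.2) :=
        Finset.mem_filter.mpr ⟨Finset.mem_product.mpr hq.1.1, h.symm⟩
      exact (Finset.card_le_one.mp h1 q hqmem p hpmem).symm
    have himg : O.image (fun p : ℤ × ℤ => p.1 - p.2)
        ⊆ ((Finset.Icc (-(b : ℤ)) (b : ℤ)).erase 0).image (fun j : ℤ => j * (m : ℤ)) := by
      intro n hn
      obtain ⟨p, hp, hpn⟩ := Finset.mem_image.mp hn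
      simp only [hO, pairsMod, Finset.mem_filter, Finset.mem_product] at hp
      obtain ⟨⟨⟨h1A, h2A⟩, hmod⟩, hne⟩ := hp
      have hdvd : (m : ℤ) ∣ n := by
        rw [← hpn]
        exact (show Int.ModEq (m : ℤ) p.2 p.1 from hmod.symm).dvd
      obtain ⟨j, hj⟩ := hdvd
      have hjne : j ≠ 0 := by
        rintro rfl
        rw [mul_zero] at hj
        exact (sub_ne_zero.mpr hne) (hpn ▸ hj)
      have h1 := Finset.mem_Icc.mp (hA h1A)
      have h2 := Finset.mem_Icc.mp (hA h2A)
      have habs : |n| ≤ (N : ℤ) - 1 := by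
        rw [← hpn, abs_sub_le_iff]
        omega
      have hjb : |j| ≤ (b : ℤ) := by
        by_contra hcon
        push_neg at hcon
        have hjb1 : (b : ℤ) + 1 ≤ |j| := by omega
        have hmul : ((b : ℤ) + 1) * m ≤ |j| * m :=
          mul_le_mul_of_nonneg_right hjb1 (by positivity)
        have habs2 : |n| = |j| * m := by
          rw [hj, abs_mul, abs_of_nonneg (by positivity : (0:ℤ) ≤ (m:ℤ))]
          ring
        have hNb : N < (b + 1) * m := by
          rw [hb, mul_comm]
          exact Nat.lt_mul_div_succ N (show 0 < m from hm)
        have hNb' : (N : ℤ) < ((b : ℤ) + 1) * m := by push_cast; exact_mod_cast hNb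
        linarith
      refine Finset.mem_image.mpr ⟨j, ?_, by rw [mul_comm, ← hj]⟩
      exact Finset.mem_erase.mpr ⟨hjne, Finset.mem_Icc.mpr ⟨neg_le_of_abs_le hjb, le_of_abs_le hjb⟩⟩
    calc O.card = (O.image (fun p : ℤ × ℤ => p.1 - p.2)).card :=
          (Finset.card_image_of_injOn hinj).symm
      _ ≤ (((Finset.Icc (-(b : ℤ)) (b : ℤ)).erase 0).image (fun j : ℤ => j * (m : ℤ))).card :=
          Finset.card_le_card himg
      _ ≤ ((Finset.Icc (-(b : ℤ)) (b : ℤ)).erase 0).card := Finset.card_image_le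
      _ ≤ 2 * b := by
          rw [Finset.card_erase_of_mem (by simp), Int.card_Icc]
          simp only [sub_neg_eq_add]
          omega
  omega

lemma resSet_bound (A : Finset ℤ) {r : ℤ} {q : ℕ} (hq : 0 < q) (hr : r ∈ resSet A q) :
    0 ≤ r ∧ r < (q : ℤ) := by
  obtain ⟨a, _, rfl⟩ := Finset.mem_image.mp hr
  have hq' : ((q : ℤ)) ≠ 0 := by positivity
  exact ⟨Int.emod_nonneg a hq', Int.emod_lt_of_pos a (by exact_mod_cast hq)⟩

lemma resSet_mul_le {A : Finset ℤ} {m n : ℕ} (hm : 0 < m) (hn : 0 < n)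
    (hco : Nat.Coprime m n) :
    (resSet A (m * n)).card ≤ (resSet A m).card * (resSet A n).card := by
  classical
  rw [← Finset.card_product]
  apply Finset.card_le_card_of_injOn (fun r => (r % (m : ℤ), r % (n : ℤ)))
  · intro r hr
    obtain ⟨a, ha, rfl⟩ := Finset.mem_image.mp hr
    rw [Finset.mem_coe, Finset.mem_product]
    push_cast
    constructor
    · exact Finset.mem_image.mpr ⟨a, ha, by
        rw [Int.emod_emod_of_dvd a (Dvd.intro _ rfl)]⟩
    · exact Finset.mem_image.mpr ⟨a, ha, by
        rw [Int.emod_emod_of_dvd a (Dvd.intro_left _ rfl)]⟩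
  · intro r hr s hs h
    simp only [Prod.mk.injEq] at h
    have hdm : (m : ℤ) ∣ s - r := (show Int.ModEq (m : ℤ) r s from h.1).dvd
    have hdn : (n : ℤ) ∣ s - r := (show Int.ModEq (n : ℤ) r s from h.2).dvd
    have hco' : IsCoprime (m : ℤ) (n : ℤ) := Nat.isCoprime_iff_coprime.mpr hco
    have hdvd : ((m : ℤ) * n) ∣ s - r := hco'.mul_dvd hdm hdn
    have h1 := resSet_bound A (Nat.mul_pos hm hn) (Finset.mem_coe.mp hr)
    have h2 := resSet_bound A (Nat.mul_pos hm hn) (Finset.mem_coe.mp hs)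
    push_cast at h1 h2
    have : s - r = 0 := Int.eq_zero_of_abs_lt_dvd hdvd (by rw [abs_sub_lt_iff]; constructor <;> nlinarith)
    linarith

private def chainFun (nxt : ℕ → ℕ) (M : ℕ) : ℕ → ℕ
  | 0 => nxt M
  | i + 1 => nxt (chainFun nxt M i)

-- prime chain via Bertrand
lemma primes_chain (M : ℕ) (hM : 1 ≤ M) :
    ∃ f : ℕ → ℕ, StrictMono f ∧ ∀ i, (f i).Prime ∧ M < f i ∧ f i ≤ 4 ^ (i + 1) * M := by
  have bert' : ∀ n : ℕ, ∃ p, (p.Prime ∧ n < p) ∧ p ≤ 2 * (n + 1) := by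
    intro n
    obtain ⟨p, hp, h1, h2⟩ := Nat.exists_prime_lt_and_le_two_mul (n + 1) n.succ_ne_zero
    exact ⟨p, ⟨hp, by omega⟩, h2⟩
  choose nxt h1 h2 using bert'
  refine ⟨chainFun nxt M, ?_, ?_⟩
  · apply strictMono_nat_of_lt_succ
    intro i
    show chainFun nxt M i < nxt (chainFun nxt M i)
    exact (h1 _).2
  · intro i
    induction i with
    | zero =>
      refine ⟨(h1 M).1, (h1 M).2, ?_⟩
      have := h2 M
      show nxt M ≤ 4 ^ 1 * M
      simp only [pow_one]
      omega
    | succ i ih =>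
      obtain ⟨hp, hMlt, hle⟩ := ih
      refine ⟨(h1 _).1, lt_trans hMlt (h1 _).2, ?_⟩
      have h3 := h2 (chainFun nxt M i)
      show nxt (chainFun nxt M i) ≤ 4 ^ (i + 1 + 1) * M
      have h4 : 4 ^ (i + 1 + 1) * M = 4 * (4 ^ (i + 1) * M) := by ring
      omega

lemma cube_le_two_pow : ∀ l : ℕ, 11 ≤ l → (l + 1) ^ 3 ≤ 2 ^ l := by
  intro l hl
  induction l, hl using Nat.le_induction with
  | base => norm_num
  | succ l hl ih =>
    have h1 : (l + 1 + 1) ^ 3 ≤ 2 * (l + 1) ^ 3 := by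
      have hcube : 6 * l + 6 ≤ l ^ 3 := by nlinarith [hl, sq_nonneg l]
      ring_nf
      nlinarith [hcube]
    calc (l + 1 + 1) ^ 3 ≤ 2 * (l + 1) ^ 3 := h1
      _ ≤ 2 * 2 ^ l := by omega
      _ = 2 ^ (l + 1) := by ring

lemma poly_le_two_pow (c : ℕ) : ∀ l : ℕ, max 11 c ≤ l → c * (l + 1) ^ 2 + 1 ≤ 2 ^ l := by
  intro l hl
  have h11 : 11 ≤ l := le_trans (le_max_left _ _) hl
  have hc : c ≤ l := le_trans (le_max_right _ _) hl
  have h3 := cube_le_two_pow l h11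
  nlinarith [sq_nonneg (l + 1)]

-- quadratic root bound
lemma quad_bound {x b d : ℝ} (hb : 0 ≤ b) (hd : 0 ≤ d)
    (h : x ^ 2 ≤ b * x + d) : x ≤ b + Real.sqrt d := by
  by_contra hcon
  push_neg at hcon
  have hs := Real.sqrt_nonneg d
  have hsq := Real.sq_sqrt hd
  nlinarith

lemma resSet_prod_le (A : Finset ℤ) (f : ℕ → ℕ) (hf : ∀ i, (f i).Prime)
    (hmono : StrictMono f) (k : ℕ) :
    (resSet A (∏ i ∈ Finset.range k, f i)).card ≤ ∏ i ∈ Finset.range k, (resSet A (f i)).card := by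
  induction k with
  | zero =>
    simp only [Finset.range_zero, Finset.prod_empty]
    have : resSet A 1 ⊆ {0} := by
      intro r hr
      obtain ⟨a, _, rfl⟩ := Finset.mem_image.mp hr
      simp
    exact le_trans (Finset.card_le_card this) (by simp)
  | succ k ih =>
    rw [Finset.prod_range_succ, Finset.prod_range_succ]
    have hpos : 0 < ∏ i ∈ Finset.range k, f i :=
      Finset.prod_pos (fun i _ => (hf i).pos)
    have hco : Nat.Coprime (∏ i ∈ Finset.range k, f i) (f k) := by
      apply Nat.Coprime.prod_left
      intro i hi
      exact (Nat.coprime_primes (hf i) (hf k)).mpr (ne_of_lt (hmono (Finset.mem_range.mp hi)))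
    calc (resSet A ((∏ i ∈ Finset.range k, f i) * f k)).card
        ≤ (resSet A (∏ i ∈ Finset.range k, f i)).card * (resSet A (f k)).card :=
          resSet_mul_le hpos (hf k).pos hco
      _ ≤ (∏ i ∈ Finset.range k, (resSet A (f i)).card) * (resSet A (f k)).card :=
          Nat.mul_le_mul_right _ ih

theorem sidon_sieve_upper_bound (C : ℝ) (hC : 0 ≤ C) :
    ∃ c : ℝ, 0 < c ∧ ∃ N₀ : ℕ, ∀ N : ℕ, N₀ ≤ N →
      ∀ (A : Finset ℤ) (ε : ℕ → ℝ),
        A ⊆ Finset.Icc 1 (N : ℤ) →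
        (∀ n : ℤ, n ≠ 0 → rMinus A n ≤ 1) →
        (∀ p : ℕ, p.Prime → 0 ≤ ε p ∧ ε p ≤ C) →
        (∀ p : ℕ, p.Prime → ((resSet A p).card : ℝ) ≤ (p : ℝ) / 2 + ε p) →
        (A.card : ℝ) ≤ c * Real.sqrt N / Real.log N := by
  classical
  set c₀ : ℕ := ⌈C⌉₊ with hc₀
  set c₅ : ℕ := Nat.log 2 (16 * (c₀ + 1)) + 1 with hc₅
  set c₆ : ℕ := 4 * (c₅ + 5) with hc₆
  set Λ : ℕ := max 11 c₆ with hΛ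
  refine ⟨4, by norm_num, 2 ^ (2 ^ Λ), ?_⟩
  intro N hN A ε hA hS hε hres
  -- basic notation
  set L : ℕ := Nat.log 2 N with hL
  set lam : ℕ := Nat.log 2 (L + 1) with hlam
  set k : ℕ := 2 * (lam + 1) with hk
  set M : ℕ := 4 * (c₀ + 1) * k + 2 with hM
  have hk1 : 1 ≤ k := by omega
  have hM1 : 1 ≤ M := by omega
  have hN2 : 2 ≤ N := by
    refine le_trans ?_ hN
    calc 2 = 2 ^ 1 := rfl
      _ ≤ 2 ^ (2 ^ Λ) := Nat.pow_le_pow_right (by norm_num) Nat.one_le_two_pow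
  have hN0 : 0 < N := by omega
  -- (F1) lam ≥ Λ
  have hlamΛ : Λ ≤ lam := by
    have h1 : 2 ^ Λ ≤ L := by
      rw [hL]
      calc 2 ^ Λ = Nat.log 2 (2 ^ (2 ^ Λ)) := (Nat.log_pow one_lt_two _).symm
        _ ≤ Nat.log 2 N := Nat.log_mono_right hN
    calc Λ = Nat.log 2 (2 ^ Λ) := (Nat.log_pow one_lt_two _).symm
      _ ≤ Nat.log 2 (L + 1) := Nat.log_mono_right (by omega)
  -- (F2) E ≤ L
  clear hN
  set μ : ℕ := Nat.log 2 M + 1 with hμ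
  set E : ℕ := 2 * k * (2 * k + μ) with hE
  have hME : M ≤ 2 ^ (c₅ + lam) := by
    have hXX : M = 8 * ((c₀ + 1) * (lam + 1)) + 2 := by rw [hM, hk]; ring
    have hX1 : 1 ≤ (c₀ + 1) * (lam + 1) := by
      calc 1 = 1 * 1 := rfl
        _ ≤ (c₀ + 1) * (lam + 1) := Nat.mul_le_mul (by omega) (by omega)
    have h1 : M ≤ 16 * ((c₀ + 1) * (lam + 1)) := by omega
    have h2 : lam + 1 ≤ 2 ^ lam := Nat.succ_le_of_lt (lam.lt_two_pow_self)
    have h3 : 16 * (c₀ + 1) ≤ 2 ^ c₅ := le_of_lt (Nat.lt_pow_succ_log_self one_lt_two _)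
    calc M ≤ 16 * ((c₀ + 1) * (lam + 1)) := h1
      _ = 16 * (c₀ + 1) * (lam + 1) := by ring
      _ ≤ 2 ^ c₅ * 2 ^ lam := Nat.mul_le_mul h3 h2
      _ = 2 ^ (c₅ + lam) := (pow_add 2 c₅ lam).symm
  have hμle : μ ≤ c₅ + lam + 1 := by
    rw [hμ]
    have := Nat.log_mono_right (b := 2) hME
    rw [Nat.log_pow one_lt_two] at this
    omega
  have hEle : E ≤ c₆ * (lam + 1) ^ 2 := by
    have h1 : 2 * k + μ ≤ (c₅ + 5) * (lam + 1) := by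
      have h1a : 2 * k + μ ≤ 4 * (lam + 1) + (c₅ + lam + 1) := by omega
      have h1b : c₅ ≤ c₅ * (lam + 1) := Nat.le_mul_of_pos_right _ (by omega)
      have h1c : (c₅ + 5) * (lam + 1) = 5 * (lam + 1) + c₅ * (lam + 1) := by ring
      omega
    calc E = 2 * k * (2 * k + μ) := hE
      _ ≤ (4 * (lam + 1)) * ((c₅ + 5) * (lam + 1)) := by
          apply Nat.mul_le_mul _ h1
          omega
      _ = c₆ * (lam + 1) ^ 2 := by rw [hc₆]; ring
  have hEL : E ≤ L := by
    have h1 := poly_le_two_pow c₆ lam (le_trans (le_of_eq hΛ.symm) hlamΛ)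
    have h2 : 2 ^ lam ≤ L + 1 := by
      rw [hlam]
      exact Nat.pow_log_le_self 2 (by omega)
    omega
  -- primes
  obtain ⟨f, hmono, hf⟩ := primes_chain M hM1
  set m : ℕ := ∏ i ∈ Finset.range k, f i with hm
  have hmpos : 0 < m := Finset.prod_pos (fun i _ => (hf i).1.pos)
  have hmle : m ≤ (4 ^ k * M) ^ k := by
    calc m ≤ ∏ _i ∈ Finset.range k, (4 ^ k * M) := by
          apply Finset.prod_le_prod'
          intro i hi
          have h1 := (hf i).2.2
          have h2 : 4 ^ (i + 1) ≤ 4 ^ k :=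
            Nat.pow_le_pow_right (by norm_num) (Finset.mem_range.mp hi)
          calc f i ≤ 4 ^ (i + 1) * M := h1
            _ ≤ 4 ^ k * M := Nat.mul_le_mul_right _ h2
      _ = (4 ^ k * M) ^ k := by rw [Finset.prod_const, Finset.card_range]
  have hm2N : m ^ 2 ≤ N := by
    have h1 : 4 ^ k * M ≤ 2 ^ (2 * k + μ) := by
      have h2 : M ≤ 2 ^ μ := le_of_lt (Nat.lt_pow_succ_log_self one_lt_two M)
      calc 4 ^ k * M ≤ 4 ^ k * 2 ^ μ := Nat.mul_le_mul_left _ h2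
        _ = 2 ^ (2 * k) * 2 ^ μ := by rw [show (4:ℕ) = 2^2 by norm_num, ← pow_mul]
        _ = 2 ^ (2 * k + μ) := (pow_add 2 _ _).symm
    calc m ^ 2 ≤ ((2 ^ (2 * k + μ)) ^ k) ^ 2 := by
          apply Nat.pow_le_pow_left
          exact le_trans hmle (Nat.pow_le_pow_left h1 k)
      _ = 2 ^ E := by rw [← pow_mul, ← pow_mul, hE]; ring_nf
      _ ≤ 2 ^ L := Nat.pow_le_pow_right (by norm_num) hEL
      _ ≤ N := Nat.pow_log_le_self 2 (by omega)
  -- real quantities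
  set T : ℝ := (2 : ℝ) ^ k with hT
  have hT1 : (1 : ℝ) ≤ T := one_le_pow₀ (by norm_num)
  have hTpos : (0 : ℝ) < T := by positivity
  have hN1R : (1:ℝ) < (N:ℝ) := by exact_mod_cast Nat.lt_of_lt_of_le one_lt_two hN2
  have hlogN : 0 < Real.log N := Real.log_pos hN1R
  -- (F4) (log N)^2 ≤ T
  have hlogT : Real.log N ^ 2 ≤ T := by
    have h1 : Real.log N ≤ (L : ℝ) + 1 := by
      have h2 : (N : ℝ) < 2 ^ (L + 1) := by
        exact_mod_cast Nat.lt_pow_succ_log_self one_lt_two N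
      have h3 : Real.log N < (L + 1) * Real.log 2 := by
        calc Real.log N < Real.log (2 ^ (L + 1)) :=
              Real.log_lt_log (by exact_mod_cast hN0) h2
          _ = (L + 1) * Real.log 2 := by
              rw [Real.log_pow]; push_cast; ring
      have h4 : Real.log 2 ≤ 1 := by
        have := Real.log_two_lt_d9
        norm_num at this ⊢
        linarith
      have h5 : ((L:ℝ) + 1) * Real.log 2 ≤ ((L:ℝ) + 1) * 1 :=
        mul_le_mul_of_nonneg_left h4 (by positivity)
      linarith
    have h5 : ((L : ℝ) + 1) ≤ (2 : ℝ) ^ (lam + 1) := by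
      have := Nat.lt_pow_succ_log_self one_lt_two (L + 1)
      have h6 : (L + 1 : ℕ) < 2 ^ (lam + 1) := this
      exact_mod_cast le_of_lt h6
    have h7 : T = ((2 : ℝ) ^ (lam + 1)) ^ 2 := by
      rw [hT, hk, ← pow_mul]; ring_nf
    rw [h7]
    exact pow_le_pow_left₀ (le_of_lt hlogN) (le_trans h1 h5) 2
  -- (F6) residue set bound
  have hresm : ((resSet A m).card : ℝ) ≤ 2 * m / T := by
    have hcrt : ((resSet A m).card : ℝ) ≤ ∏ i ∈ Finset.range k, ((resSet A (f i)).card : ℝ) := by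
      have h := resSet_prod_le A f (fun i => (hf i).1) hmono k
      rw [← hm] at h
      calc ((resSet A m).card : ℝ)
          ≤ ((∏ i ∈ Finset.range k, (resSet A (f i)).card : ℕ) : ℝ) := by exact_mod_cast h
        _ = ∏ i ∈ Finset.range k, ((resSet A (f i)).card : ℝ) := by push_cast; rfl
    have hterm : ∀ i ∈ Finset.range k, ((resSet A (f i)).card : ℝ)
        ≤ ((f i : ℝ) / 2) * Real.exp (1 / (2 * k)) := by
      intro i _
      have hp := (hf i).1
      have h1 : ((resSet A (f i)).card : ℝ) ≤ (f i : ℝ) / 2 + C :=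
        le_trans (hres (f i) hp) (by linarith [(hε (f i) hp).2])
      have hfiM : (M : ℝ) ≤ (f i : ℝ) := by exact_mod_cast le_of_lt (hf i).2.1
      have hCk : C ≤ (f i : ℝ) / (4 * k) := by
        have hkR : (1:ℝ) ≤ (k:ℝ) := by exact_mod_cast hk1
        have h3 : C ≤ (c₀ : ℝ) + 1 := by
          have h3a := Nat.le_ceil C
          have h3b : ((⌈C⌉₊ : ℕ) : ℝ) = (c₀ : ℝ) := by rw [hc₀]
          linarith
        have h4 : (M : ℝ) = 4 * ((c₀ : ℝ) + 1) * k + 2 := by rw [hM]; push_cast; ring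
        have h2 : 4 * C * k ≤ (M : ℝ) := by nlinarith
        rw [le_div_iff₀ (by positivity : (0:ℝ) < 4 * (k:ℝ))]
        linarith [hfiM]
      have h5 : (f i : ℝ) / 2 + C ≤ ((f i : ℝ) / 2) * (1 + 1 / (2 * k)) := by
        have hfpos : (0 : ℝ) < (f i : ℝ) := by exact_mod_cast hp.pos
        have : ((f i : ℝ) / 2) * (1 + 1 / (2 * k)) = (f i : ℝ) / 2 + (f i : ℝ) / (4 * k) := by
          field_simp
          ring
        rw [this]
        linarith
      have h6 : 1 + 1 / (2 * (k:ℝ)) ≤ Real.exp (1 / (2 * k)) := by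
        have := Real.add_one_le_exp (1 / (2 * (k:ℝ)))
        linarith
      have hfnn : (0:ℝ) ≤ (f i : ℝ) / 2 := by positivity
      calc ((resSet A (f i)).card : ℝ) ≤ (f i : ℝ) / 2 + C := h1
        _ ≤ ((f i : ℝ) / 2) * (1 + 1 / (2 * k)) := h5
        _ ≤ ((f i : ℝ) / 2) * Real.exp (1 / (2 * k)) := by
            apply mul_le_mul_of_nonneg_left h6 hfnn
    have hprod : ∏ i ∈ Finset.range k, ((resSet A (f i)).card : ℝ)
        ≤ ∏ i ∈ Finset.range k, ((f i : ℝ) / 2 * Real.exp (1 / (2 * k))) := by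
      apply Finset.prod_le_prod
      · intro i _; exact Nat.cast_nonneg _
      · exact hterm
    have hcomp : ∏ i ∈ Finset.range k, ((f i : ℝ) / 2 * Real.exp (1 / (2 * k)))
        = ((m : ℝ) / T) * Real.exp (1 / (2 * k)) ^ k := by
      rw [Finset.prod_mul_distrib, Finset.prod_const, Finset.card_range,
        Finset.prod_div_distrib, Finset.prod_const, Finset.card_range]
      have : (m : ℝ) = ∏ i ∈ Finset.range k, (f i : ℝ) := by
        rw [hm]; push_cast; rfl
      rw [this, hT]
    have hexp : Real.exp (1 / (2 * (k:ℝ))) ^ k ≤ 2 := by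
      have h1 : Real.exp (1 / (2 * (k:ℝ))) ^ k = Real.exp ((k : ℝ) * (1 / (2 * k))) := by
        rw [Real.exp_nat_mul]
      have hk0 : (k:ℝ) ≠ 0 := by positivity
      have h2 : (k : ℝ) * (1 / (2 * k)) = 1 / 2 := by
        field_simp
      rw [h1, h2]
      have h3a : Real.exp (1/2 : ℝ) ^ (2:ℕ) = Real.exp 1 := by
        rw [← Real.exp_nat_mul]
        norm_num
      have h3b : Real.exp 1 < 4 := lt_trans Real.exp_one_lt_d9 (by norm_num)
      have h3c : Real.exp (1/2 : ℝ) ^ 2 < (2:ℝ) ^ 2 := by rw [h3a]; norm_num; linarith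
      exact le_of_lt (lt_of_pow_lt_pow_left₀ 2 (by norm_num) h3c)
    calc ((resSet A m).card : ℝ) ≤ ∏ i ∈ Finset.range k, ((resSet A (f i)).card : ℝ) := hcrt
      _ ≤ ((m : ℝ) / T) * Real.exp (1 / (2 * k)) ^ k := by rw [← hcomp]; exact hprod
      _ ≤ ((m : ℝ) / T) * 2 := by
          apply mul_le_mul_of_nonneg_left hexp (div_nonneg (Nat.cast_nonneg m) (le_of_lt hTpos))
      _ = 2 * m / T := by ring
  -- (F5) + (F7): assemble
  have hx2 : (A.card : ℝ) ^ 2 ≤ (2 * Real.sqrt N / T) * A.card + 4 * N / T := by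
    have h1 := card_sq_le_pairs A m
    have h2 := pairs_le (N := N) hmpos hA hS
    have h3 : ((pairsMod A m).card : ℝ) ≤ (A.card : ℝ) + 2 * ((N : ℝ) / m) := by
      calc ((pairsMod A m).card : ℝ) ≤ ((A.card + 2 * (N / m) : ℕ) : ℝ) := by exact_mod_cast h2
        _ = (A.card : ℝ) + 2 * ((N / m : ℕ) : ℝ) := by push_cast; ring
        _ ≤ (A.card : ℝ) + 2 * ((N : ℝ) / m) := by
            have := Nat.cast_div_le (m := N) (n := m) (α := ℝ)
            linarith
    have hmsqrt : (m : ℝ) ≤ Real.sqrt N := by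
      rw [show ((m:ℝ)) = Real.sqrt ((m:ℝ)^2) from (Real.sqrt_sq (by positivity)).symm]
      apply Real.sqrt_le_sqrt
      exact_mod_cast hm2N
    have hNm0 : (0:ℝ) ≤ (N : ℝ) / m := div_nonneg (Nat.cast_nonneg _) (Nat.cast_nonneg _)
    have hpnn : (0:ℝ) ≤ (A.card : ℝ) + 2 * ((N : ℝ) / m) :=
      add_nonneg (Nat.cast_nonneg _) (mul_nonneg (by norm_num) hNm0)
    have hmT0 : (0:ℝ) ≤ 2 * (m:ℝ) / T :=
      div_nonneg (mul_nonneg (by norm_num) (Nat.cast_nonneg _)) (le_of_lt hTpos)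
    calc (A.card : ℝ) ^ 2 ≤ (resSet A m).card * (pairsMod A m).card := h1
      _ ≤ (2 * m / T) * ((A.card : ℝ) + 2 * ((N : ℝ) / m)) := by
          apply mul_le_mul hresm h3 (Nat.cast_nonneg _) hmT0
      _ = (2 * m / T) * (A.card : ℝ) + 4 * N / T := by
          field_simp
          ring
      _ ≤ (2 * Real.sqrt N / T) * A.card + 4 * N / T := by
          have hstep : (2 * (m:ℝ) / T) * (A.card : ℝ) ≤ (2 * Real.sqrt N / T) * A.card := by
            apply mul_le_mul_of_nonneg_right _ (Nat.cast_nonneg _)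
            exact (div_le_div_iff_of_pos_right hTpos).mpr (by linarith)
          linarith
  -- final quadratic solve
  have hb0 : (0:ℝ) ≤ 2 * Real.sqrt N / T :=
    div_nonneg (mul_nonneg (by norm_num) (Real.sqrt_nonneg _)) (le_of_lt hTpos)
  have hd0 : (0:ℝ) ≤ 4 * (N:ℝ) / T :=
    div_nonneg (mul_nonneg (by norm_num) (Nat.cast_nonneg _)) (le_of_lt hTpos)
  have hxle := quad_bound hb0 hd0 hx2
  have hsT : (0:ℝ) < Real.sqrt T := Real.sqrt_pos.mpr hTpos
  have hdval : Real.sqrt (4 * (N:ℝ) / T) = 2 * Real.sqrt N / Real.sqrt T := by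
    have hd : (4 * (N:ℝ) / T) = (2 * Real.sqrt N / Real.sqrt T) ^ 2 := by
      rw [div_pow, mul_pow, Real.sq_sqrt (Nat.cast_nonneg N), Real.sq_sqrt (le_of_lt hTpos)]
      norm_num
    rw [hd, Real.sqrt_sq (div_nonneg (mul_nonneg (by norm_num) (Real.sqrt_nonneg _)) (le_of_lt hsT))]
  have hTT : Real.sqrt T ≤ T := by
    have h := Real.sqrt_le_sqrt (show T ≤ T ^ 2 by rw [sq]; exact le_mul_of_one_le_left (le_of_lt hTpos) hT1)
    rwa [Real.sqrt_sq (by linarith)] at h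
  have h1T : 2 * Real.sqrt N / T ≤ 2 * Real.sqrt N / Real.sqrt T := by
    apply div_le_div_of_nonneg_left (mul_nonneg (by norm_num) (Real.sqrt_nonneg _)) hsT hTT
  have hlogsT : Real.log N ≤ Real.sqrt T := by
    have := Real.sqrt_le_sqrt hlogT
    rwa [Real.sqrt_sq (le_of_lt hlogN)] at this
  have hfinal : (A.card : ℝ) ≤ 4 * Real.sqrt N / Real.sqrt T := by
    have : 2 * Real.sqrt N / Real.sqrt T + 2 * Real.sqrt N / Real.sqrt T
        = 4 * Real.sqrt N / Real.sqrt T := by ring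
    calc (A.card : ℝ) ≤ 2 * Real.sqrt N / T + Real.sqrt (4 * (N:ℝ) / T) := hxle
      _ = 2 * Real.sqrt N / T + 2 * Real.sqrt N / Real.sqrt T := by rw [hdval]
      _ ≤ 2 * Real.sqrt N / Real.sqrt T + 2 * Real.sqrt N / Real.sqrt T := by linarith
      _ = 4 * Real.sqrt N / Real.sqrt T := this
  calc (A.card : ℝ) ≤ 4 * Real.sqrt N / Real.sqrt T := hfinal
    _ ≤ 4 * Real.sqrt N / Real.log N := by
        apply div_le_div_of_nonneg_left (mul_nonneg (by norm_num) (Real.sqrt_nonneg _)) hlogN hlogsT
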